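/- arXiv:1201.4709 — 2 statements merged into one kernel-verified Lean document; each statement's English description precedes it below -/
import Mathlib

section
/- For every c > 0 and every z ∈ ℝ, the (complex-valued) integral ∫_ℝ exp((c+is)³/3 − (c+is)z) ds converges absolutely and equals 2π · Ai(z); that is, Ai(z) = (2πi)^{-1} ∫_{Γ_c} e^{u³/3 − uz} du, where Γ_c = {c + iy : y ∈ ℝ} is oriented upwards. -/
open MeasureTheory Filter
open Complex intervalIntegral

noncomputable def airyF (z : ℝ) : ℂ → ℂ := fun u => Complex.exp (u^3/3 - u*(z:ℂ))

lemma airyF_norm (z x y : ℝ) : ‖airyF z ((x:ℂ)+(y:ℂ)*I)‖ = Real.exp (x^3/3 - x*y^2 - x*z) := by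
  rw [airyF, Complex.norm_exp]
  congr 1
  simp [Complex.div_re, Complex.normSq, pow_succ, Complex.ext_iff]
  ring

lemma airyF_diff (z : ℝ) : Differentiable ℂ (airyF z) := by
  apply Differentiable.cexp
  fun_prop

lemma airyF_integrable (c : ℝ) (hc : 0 < c) (z : ℝ) :
    Integrable (fun s : ℝ => airyF z ((c:ℂ)+(s:ℂ)*I)) := by
  have hg : Integrable (fun s : ℝ => Real.exp (c^3/3 - c*z) * Real.exp (-c * s^2)) :=
    (integrable_exp_neg_mul_sq hc).const_mul _
  refine hg.mono' ?_ ?_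
  · apply Continuous.aestronglyMeasurable
    apply (airyF_diff z).continuous.comp
    fun_prop
  · filter_upwards with s
    rw [airyF_norm, ← Real.exp_add]
    apply le_of_eq
    congr 1
    ring

lemma airyF_left_edge (z b : ℝ) :
    (∫ y in (-b)..b, airyF z ((y:ℂ)*I))
      = ((2 * ∫ t in (0:ℝ)..b, Real.cos (t^3/3 + z*t) : ℝ) : ℂ) := by
  have cont : Continuous fun y : ℝ => airyF z ((y:ℂ)*I) := by
    apply (airyF_diff z).continuous.comp
    fun_prop
  have h1 : (∫ y in (-b)..(0:ℝ), airyF z ((y:ℂ)*I)) + (∫ y in (0:ℝ)..b, airyF z ((y:ℂ)*I))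
      = ∫ y in (-b)..b, airyF z ((y:ℂ)*I) :=
    integral_add_adjacent_intervals (cont.intervalIntegrable _ _) (cont.intervalIntegrable _ _)
  have h2 : (∫ y in (0:ℝ)..b, airyF z ((↑(-y):ℂ)*I)) = ∫ y in (-b)..(0:ℝ), airyF z ((y:ℂ)*I) := by
    simpa using intervalIntegral.integral_comp_neg (a := 0) (b := b) (fun y : ℝ => airyF z ((y:ℂ)*I))
  have h3 : ∀ y : ℝ, airyF z ((↑(-y):ℂ)*I) + airyF z ((y:ℂ)*I)
      = 2 * Complex.cos ((y^3/3 + z*y : ℝ) : ℂ) := by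
    intro y
    rw [Complex.two_cos, airyF, airyF]
    congr 2
    · push_cast
      ring_nf
      rw [show (I:ℂ)^3 = -I by rw [pow_succ, Complex.I_sq]; ring]
      ring
    · push_cast
      ring_nf
      rw [show (I:ℂ)^3 = -I by rw [pow_succ, Complex.I_sq]; ring]
      ring
  have h4 : IntervalIntegrable (fun y : ℝ => airyF z ((↑(-y):ℂ)*I)) MeasureTheory.volume 0 b :=
    (cont.comp continuous_neg).intervalIntegrable _ _
  rw [← h1, ← h2, ← intervalIntegral.integral_add h4 (cont.intervalIntegrable _ _)]
  simp_rw [h3, ← Complex.ofReal_cos, intervalIntegral.integral_const_mul,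
    intervalIntegral.integral_ofReal]
  push_cast
  ring

lemma airyF_horiz (z c : ℝ) (hc : 0 ≤ c) (y : ℝ) (hy : c^2/3 + |z| + 1 ≤ y^2) :
    ‖∫ x in (0:ℝ)..c, airyF z ((x:ℂ)+(y:ℂ)*I)‖ ≤ 1/(y^2 - c^2/3 - |z|) := by
  set M : ℝ := y^2 - c^2/3 - |z| with hM
  have hM1 : 1 ≤ M := by simp only [hM]; linarith
  have hM0 : 0 < M := lt_of_lt_of_le one_pos hM1
  clear_value M
  have step1 : ‖∫ x in (0:ℝ)..c, airyF z ((x:ℂ)+(y:ℂ)*I)‖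
      ≤ ∫ x in (0:ℝ)..c, ‖airyF z ((x:ℂ)+(y:ℂ)*I)‖ :=
    intervalIntegral.norm_integral_le_integral_norm hc
  have contn : Continuous fun x : ℝ => airyF z ((x:ℂ)+(y:ℂ)*I) := by
    apply (airyF_diff z).continuous.comp; fun_prop
  have step2 : (∫ x in (0:ℝ)..c, ‖airyF z ((x:ℂ)+(y:ℂ)*I)‖)
      ≤ ∫ x in (0:ℝ)..c, Real.exp (-M * x) := by
    apply intervalIntegral.integral_mono_on hc
      (contn.norm.intervalIntegrable _ _)
      ((Real.continuous_exp.comp (by fun_prop)).intervalIntegrable _ _)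
    intro x hx
    rw [Set.mem_Icc] at hx
    rw [airyF_norm]
    apply Real.exp_le_exp.2
    rw [hM]
    nlinarith [hx.1, hx.2, abs_nonneg z, le_abs_self z, neg_abs_le z, sq_nonneg x,
      sq_nonneg (c - x)]
  have step3 : (∫ x in (0:ℝ)..c, Real.exp (-M * x)) = (1 - Real.exp (-M * c)) / M := by
    have h := intervalIntegral.integral_comp_mul_left (a := (0:ℝ)) (b := c)
      (fun x => Real.exp x) (neg_ne_zero.2 hM0.ne')
    rw [h, integral_exp]
    rw [mul_zero, Real.exp_zero, smul_eq_mul]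
    field_simp
    ring
  have step4 : (1 - Real.exp (-M * c)) / M ≤ 1 / M := by
    gcongr
    linarith [Real.exp_pos (-M*c)]
  calc ‖∫ x in (0:ℝ)..c, airyF z ((x:ℂ)+(y:ℂ)*I)‖ ≤ _ := step1
    _ ≤ _ := step2
    _ = _ := step3
    _ ≤ 1/M := step4

lemma airyF_rect (z c b : ℝ) :
    (∫ y in (-b)..b, airyF z ((c:ℂ)+(y:ℂ)*I)) - (∫ y in (-b)..b, airyF z ((y:ℂ)*I))
      = (-I) * ((∫ x in (0:ℝ)..c, airyF z ((x:ℂ)+(b:ℂ)*I))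
          - (∫ x in (0:ℝ)..c, airyF z ((x:ℂ)+((-b:ℝ):ℂ)*I))) := by
  have h0 := Complex.integral_boundary_rect_eq_zero_of_differentiableOn (airyF z)
    ⟨0, -b⟩ ⟨c, b⟩ ((airyF_diff z).differentiableOn)
  dsimp only at h0
  simp only [Complex.ofReal_zero, zero_add, smul_eq_mul, Complex.ofReal_neg] at h0
  have h1 : I * ((∫ y in (-b)..b, airyF z ((c:ℂ)+(y:ℂ)*I)) - (∫ y in (-b)..b, airyF z ((y:ℂ)*I)))
      = (∫ x in (0:ℝ)..c, airyF z ((x:ℂ)+(b:ℂ)*I))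
          - (∫ x in (0:ℝ)..c, airyF z ((x:ℂ)+((-b:ℝ):ℂ)*I)) := by
    push_cast
    linear_combination h0
  calc (∫ y in (-b)..b, airyF z ((c:ℂ)+(y:ℂ)*I)) - (∫ y in (-b)..b, airyF z ((y:ℂ)*I))
      = (-I) * (I * ((∫ y in (-b)..b, airyF z ((c:ℂ)+(y:ℂ)*I))
          - (∫ y in (-b)..b, airyF z ((y:ℂ)*I)))) := by
        rw [← mul_assoc, neg_mul, Complex.I_mul_I]; ring
    _ = _ := by rw [h1]


/-- For every `c > 0` and every `z ∈ ℝ`, the complex integral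
`∫_ℝ exp((c+is)³/3 − (c+is)z) ds` converges absolutely and equals `2π · Ai(z)`. -/
theorem airy_contour_integral
    (Ai : ℝ → ℝ)
    (hAi : ∀ x : ℝ, Tendsto (fun b : ℝ => ∫ t in (0:ℝ)..b, Real.cos (t ^ 3 / 3 + x * t))
      atTop (nhds (Real.pi * Ai x)))
    (c : ℝ) (hc : 0 < c) (z : ℝ) :
    Integrable (fun s : ℝ =>
        Complex.exp (((c : ℂ) + (s : ℂ) * Complex.I) ^ 3 / 3
          - ((c : ℂ) + (s : ℂ) * Complex.I) * (z : ℂ))) ∧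
    (∫ s : ℝ,
        Complex.exp (((c : ℂ) + (s : ℂ) * Complex.I) ^ 3 / 3
          - ((c : ℂ) + (s : ℂ) * Complex.I) * (z : ℂ)))
      = ((2 * Real.pi * Ai z : ℝ) : ℂ) := by
  have hint : Integrable (fun s : ℝ => airyF z ((c:ℂ)+(s:ℂ)*I)) := airyF_integrable c hc z
  refine ⟨hint, ?_⟩
  -- Right edge tends to the full integral
  have hC : Tendsto (fun b : ℝ => ∫ y in (-b)..b, airyF z ((c:ℂ)+(y:ℂ)*I)) atTop
      (nhds (∫ s : ℝ, airyF z ((c:ℂ)+(s:ℂ)*I))) :=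
    MeasureTheory.intervalIntegral_tendsto_integral hint tendsto_neg_atTop_atBot tendsto_id
  -- Left edge tends to 2π Ai z
  have hD : Tendsto (fun b : ℝ => ∫ y in (-b)..b, airyF z ((y:ℂ)*I)) atTop
      (nhds ((2 * Real.pi * Ai z : ℝ) : ℂ)) := by
    simp_rw [airyF_left_edge]
    have h1 : Tendsto (fun b : ℝ => (2 * ∫ t in (0:ℝ)..b, Real.cos (t^3/3 + z*t) : ℝ)) atTop
        (nhds (2 * (Real.pi * Ai z))) := (hAi z).const_mul 2
    have := (Complex.continuous_ofReal.tendsto _).comp h1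
    simpa [Function.comp_def, Complex.ofReal_mul, mul_assoc] using this
  -- Difference tends to 0
  have hdiff : Tendsto (fun b : ℝ => (∫ y in (-b)..b, airyF z ((c:ℂ)+(y:ℂ)*I))
      - (∫ y in (-b)..b, airyF z ((y:ℂ)*I))) atTop (nhds 0) := by
    apply squeeze_zero_norm' (a := fun b : ℝ => 2 / (b^2 - c^2/3 - |z|))
    · filter_upwards [eventually_ge_atTop (c^2/3 + |z| + 1), eventually_ge_atTop (1:ℝ)]
        with b hb1 hb2
      have hbsq : c^2/3 + |z| + 1 ≤ b^2 := by nlinarith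
      have hbsq' : c^2/3 + |z| + 1 ≤ (-b)^2 := by rw [neg_sq]; exact hbsq
      rw [airyF_rect, norm_mul, norm_neg, Complex.norm_I, one_mul]
      calc ‖(∫ x in (0:ℝ)..c, airyF z ((x:ℂ)+(b:ℂ)*I))
            - (∫ x in (0:ℝ)..c, airyF z ((x:ℂ)+((-b:ℝ):ℂ)*I))‖
          ≤ ‖∫ x in (0:ℝ)..c, airyF z ((x:ℂ)+(b:ℂ)*I)‖
            + ‖∫ x in (0:ℝ)..c, airyF z ((x:ℂ)+((-b:ℝ):ℂ)*I)‖ := norm_sub_le _ _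
        _ ≤ 1/(b^2 - c^2/3 - |z|) + 1/((-b)^2 - c^2/3 - |z|) := by
            gcongr <;> [exact airyF_horiz z c hc.le b hbsq; exact airyF_horiz z c hc.le (-b) hbsq']
        _ = 2 / (b^2 - c^2/3 - |z|) := by rw [neg_sq]; ring
    · have hts : Tendsto (fun b : ℝ => b^2 - c^2/3 - |z|) atTop atTop := by
        apply tendsto_atTop_add_const_right
        apply tendsto_atTop_add_const_right
        exact tendsto_pow_atTop two_ne_zero
      exact Tendsto.div_atTop tendsto_const_nhds hts
  have hC' : Tendsto (fun b : ℝ => ∫ y in (-b)..b, airyF z ((c:ℂ)+(y:ℂ)*I)) atTop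
      (nhds ((2 * Real.pi * Ai z : ℝ) : ℂ)) := by
    have := hdiff.add hD
    rw [zero_add] at this
    simpa using this
  exact tendsto_nhds_unique hC hC'
end

section
/- Let X(t), t ∈ I, be a real-valued stochastic process on a probability space, where I ⊆ ℝ is an interval. Assume: (1) there is a countable dense subset J of I such that lim_{K→∞} P(|X(t)| ≤ K for all t ∈ J) = 1; and (2) there are α, β > 0 such that for each M > 0 there exist ε > 0 and c > 0 with E(|X^M(t) − X^M(s)|^α) ≤ c|t−s|^{1+β} for all s, t ∈ I with |t−s| < ε. Then for every γ ∈ (0, β/α) the process X has a version (a process Y with Y(t) = X(t) almost surely for each t ∈ I) all of whose paths are locally Hölder continuous on I with exponent γ. -/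
open MeasureTheory Filter Set Topology
open scoped ENNReal NNReal


noncomputable def clampR (M x : ℝ) : ℝ := max (-M) (min M x)

lemma clampR_abs_le {M : ℝ} (hM : 0 ≤ M) (x : ℝ) : |clampR M x| ≤ M := by
  rw [abs_le]; constructor
  · exact le_max_left _ _
  · exact max_le (by linarith) (min_le_left _ _)

lemma clampR_eq_self {M x : ℝ} (h : |x| ≤ M) : clampR M x = x := by
  rw [abs_le] at h
  rw [clampR, min_eq_right h.2, max_eq_right (by linarith [h.1])]

lemma eq_self_of_clampR_lt {M x : ℝ} (hM : 0 ≤ M) (h : |clampR M x| < M) : clampR M x = x := by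
  rcases le_or_gt x M with h1 | h1
  · rcases le_or_gt (-M) x with h2 | h2
    · exact clampR_eq_self (abs_le.2 ⟨by linarith, h1⟩)
    · exfalso; rw [clampR, min_eq_right h1, max_eq_left h2.le] at h
      rw [abs_neg, abs_of_nonneg hM] at h; exact lt_irrefl _ h
  · exfalso; rw [clampR, min_eq_left h1.le, max_eq_right (by linarith)] at h
    rw [abs_of_nonneg hM] at h; exact lt_irrefl _ h

lemma measurable_clampR {Ω : Type*} [MeasurableSpace Ω] {g : Ω → ℝ} (hg : Measurable g) (M : ℝ) :
    Measurable fun ω => clampR M (g ω) :=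
  measurable_const.max (measurable_const.min hg)

/-- Markov's inequality specialized. -/
lemma meas_abs_gt_le {Ω : Type*} [MeasurableSpace Ω] (P : Measure Ω) [IsProbabilityMeasure P]
    {Z : Ω → ℝ} (hZ : Measurable Z) {b : ℝ} (hb : ∀ ω, |Z ω| ≤ b)
    {α : ℝ} (hα : 0 < α) {a : ℝ} (ha : 0 < a) :
    P {ω | a < |Z ω|} ≤ ENNReal.ofReal (a ^ (-α) * ∫ ω, |Z ω| ^ α ∂P) := by
  have hmeas : Measurable fun ω => |Z ω| ^ α :=
    (Real.continuous_rpow_const hα.le).measurable.comp hZ.abs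
  have hint : Integrable (fun ω => |Z ω| ^ α) P := by
    refine (integrable_const (b ^ α)).mono' hmeas.aestronglyMeasurable ?_
    filter_upwards with ω
    rw [Real.norm_eq_abs, abs_of_nonneg (Real.rpow_nonneg (abs_nonneg _) _)]
    exact Real.rpow_le_rpow (abs_nonneg _) (hb ω) hα.le
  have hmarkov := mul_meas_ge_le_integral_of_nonneg
    (ae_of_all _ fun ω => Real.rpow_nonneg (abs_nonneg (Z ω)) α) hint (a ^ α)
  have hsub : {ω | a < |Z ω|} ⊆ {ω | a ^ α ≤ |Z ω| ^ α} := fun ω h =>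
    Real.rpow_le_rpow ha.le (le_of_lt h) hα.le
  have hfin : P {ω | a ^ α ≤ |Z ω| ^ α} ≠ ⊤ := measure_ne_top _ _
  calc P {ω | a < |Z ω|} ≤ P {ω | a ^ α ≤ |Z ω| ^ α} := measure_mono hsub
    _ = ENNReal.ofReal (P {ω | a ^ α ≤ |Z ω| ^ α}).toReal := (ENNReal.ofReal_toReal hfin).symm
    _ ≤ ENNReal.ofReal (a ^ (-α) * ∫ ω, |Z ω| ^ α ∂P) := by
        apply ENNReal.ofReal_le_ofReal
        have hapos : (0:ℝ) < a ^ α := Real.rpow_pos_of_pos ha α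
        rw [Real.rpow_neg ha.le]
        calc (P {ω | a ^ α ≤ |Z ω| ^ α}).toReal
            = (a ^ α)⁻¹ * (a ^ α * (P {x | a ^ α ≤ |Z x| ^ α}).toReal) := by
              field_simp
          _ ≤ (a ^ α)⁻¹ * ∫ ω, |Z ω| ^ α ∂P :=
              mul_le_mul_of_nonneg_left hmarkov (inv_nonneg.2 hapos.le)

lemma ae_eventually_of_geom {Ω : Type*} [MeasurableSpace Ω] (P : Measure Ω)
    [IsProbabilityMeasure P] (E : ℕ → Set Ω) {K ρ : ℝ} (hρ0 : 0 ≤ ρ) (hρ1 : ρ < 1) (N₀ : ℕ)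
    (h : ∀ n, N₀ ≤ n → P (E n) ≤ ENNReal.ofReal (K * ρ ^ n)) :
    ∀ᵐ ω ∂P, ∀ᶠ n in atTop, ω ∉ E n := by
  have hsum : (∑' n : ℕ, P (E (n + N₀))) ≠ ⊤ := by
    have hb : ∀ n : ℕ, P (E (n + N₀)) ≤ ENNReal.ofReal (|K| * ρ ^ n) := by
      intro n
      refine (h (n + N₀) (Nat.le_add_left _ _)).trans (ENNReal.ofReal_le_ofReal ?_)
      have : ρ ^ (n + N₀) ≤ ρ ^ n := pow_le_pow_of_le_one hρ0 hρ1.le (Nat.le_add_right _ _)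
      calc K * ρ ^ (n + N₀) ≤ |K| * ρ ^ (n + N₀) :=
            mul_le_mul_of_nonneg_right (le_abs_self K) (pow_nonneg hρ0 _)
        _ ≤ |K| * ρ ^ n := mul_le_mul_of_nonneg_left this (abs_nonneg K)
    have hsummable : Summable fun n : ℕ => |K| * ρ ^ n :=
      (summable_geometric_of_lt_one hρ0 hρ1).mul_left _
    have : (∑' n : ℕ, P (E (n + N₀))) ≤ ∑' n : ℕ, ENNReal.ofReal (|K| * ρ ^ n) :=
      ENNReal.tsum_le_tsum hb
    refine ne_top_of_le_ne_top ?_ this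
    rw [← ENNReal.ofReal_tsum_of_nonneg (fun n => by positivity) hsummable]
    exact ENNReal.ofReal_ne_top
  filter_upwards [ae_eventually_notMem hsum] with ω hω
  rw [eventually_atTop] at hω ⊢
  obtain ⟨N₁, hN₁⟩ := hω
  refine ⟨N₁ + N₀, fun n hn => ?_⟩
  have : n - N₀ ≥ N₁ := by omega
  have h2 := hN₁ (n - N₀) this
  have : n - N₀ + N₀ = n := by omega
  rwa [this] at h2

private lemma half_pow_rpow (γ : ℝ) (n : ℕ) : ((1/2:ℝ)^n)^γ = ((2:ℝ)^(-γ))^n := by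
  have h1 : ((1/2:ℝ)^n)^γ = (2:ℝ)^(-((n:ℝ)*γ)) := by
    rw [one_div, ← Real.rpow_natCast (2⁻¹:ℝ) n, ← Real.rpow_mul (by norm_num)]
    rw [Real.inv_rpow (by norm_num), ← Real.rpow_neg (by norm_num)]
  have h2 : ((2:ℝ)^(-γ))^n = (2:ℝ)^(-γ*(n:ℝ)) := by
    rw [← Real.rpow_natCast ((2:ℝ)^(-γ)) n, ← Real.rpow_mul (by norm_num)]
  rw [h1, h2]; ring_nf

private lemma geom_tail {r : ℝ} (hr0 : 0 ≤ r) (hr1 : r < 1) (n m : ℕ) :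
    ∑ j ∈ Finset.Icc n m, r ^ j ≤ r ^ n * (1 - r)⁻¹ := by
  rw [← Finset.Ico_add_one_right_eq_Icc, Finset.sum_Ico_eq_sum_range]
  have : ∀ i ∈ Finset.range (m + 1 - n), r ^ (n + i) = r ^ n * r ^ i := fun i _ => pow_add r n i
  rw [Finset.sum_congr rfl this, ← Finset.mul_sum]
  apply mul_le_mul_of_nonneg_left ?_ (pow_nonneg hr0 n)
  have hsummable : Summable fun i : ℕ => r ^ i := summable_geometric_of_lt_one hr0 hr1
  calc ∑ i ∈ Finset.range (m + 1 - n), r ^ i ≤ ∑' i : ℕ, r ^ i :=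
        Summable.sum_le_tsum _ (fun i _ => pow_nonneg hr0 i) hsummable
    _ = (1 - r)⁻¹ := tsum_geometric_of_lt_one hr0 hr1

/-- Scale selection: for `0 < d ≤ (1/2)^N`, find `n ≥ N` with `(1/2)^(n+1) < d ≤ (1/2)^n`. -/
private lemma exists_scale {d : ℝ} {N : ℕ} (hd : 0 < d) (hdN : d ≤ (1/2:ℝ)^N) :
    ∃ n : ℕ, N ≤ n ∧ (1/2:ℝ)^(n+1) < d ∧ d ≤ (1/2:ℝ)^n := by
  have hex : ∃ n : ℕ, (1/2:ℝ)^(n+1) < d := by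
    obtain ⟨n, hn⟩ := exists_pow_lt_of_lt_one hd (by norm_num : (1/2:ℝ) < 1)
    exact ⟨n, lt_of_le_of_lt (pow_le_pow_of_le_one (by norm_num) (by norm_num) (by omega)) hn⟩
  classical
  let n := Nat.find hex
  have hn : (1/2:ℝ)^(n+1) < d := Nat.find_spec hex
  have hNn : N ≤ n := by
    by_contra hcon
    push_neg at hcon
    have : (1/2:ℝ)^N ≤ (1/2:ℝ)^(n+1) :=
      pow_le_pow_of_le_one (by norm_num) (by norm_num) (by omega)
    linarith
  refine ⟨n, hNn, hn, ?_⟩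
  rcases Nat.eq_zero_or_pos n with h0 | h0
  · rw [h0]
    calc d ≤ (1/2:ℝ)^N := hdN
      _ ≤ 1 := pow_le_one₀ (by norm_num) (by norm_num)
      _ = (1/2:ℝ)^(0:ℕ) := by norm_num
  · have := Nat.find_min hex (show n - 1 < n by omega)
    push_neg at this
    have heq : n - 1 + 1 = n := by omega
    rwa [heq] at this

private lemma dy_raise {k : ℤ} {m m' : ℕ} (h : m ≤ m') :
    (k : ℝ) / 2 ^ m = ((k * 2 ^ (m' - m) : ℤ) : ℝ) / 2 ^ m' := by
  have h2 : ((2:ℝ)) ^ m' = 2 ^ m * 2 ^ (m' - m) := by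
    rw [← pow_add]; congr 1; omega
  push_cast
  rw [h2]
  field_simp

section chain

variable {S : Set ℝ} {f : ℝ → ℝ} {γ : ℝ} {N : ℕ}

private lemma dy_le_dy {p : ℕ} {i j : ℤ} (h : i ≤ j) : (i : ℝ) / 2 ^ p ≤ (j : ℝ) / 2 ^ p := by
  apply div_le_div_of_nonneg_right ?_ (by positivity)
  · exact_mod_cast h

private lemma dy_level_succ {m : ℕ} (k' : ℤ) :
    ((2 * k' : ℤ) : ℝ) / 2 ^ (m + 1) = (k' : ℝ) / 2 ^ m := by
  push_cast; ring

/-- Adjacent (or equal) dyadic pairs at level `p`. -/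
private lemma chain_adj
    (hstep : ∀ n : ℕ, N ≤ n → ∀ k : ℤ, (k : ℝ) / 2 ^ n ∈ S → ((k : ℝ) + 1) / 2 ^ n ∈ S →
      |f (((k : ℝ) + 1) / 2 ^ n) - f ((k : ℝ) / 2 ^ n)| ≤ ((2 : ℝ) ^ (-γ)) ^ n)
    {p : ℕ} (hNp : N ≤ p) {k l : ℤ} (hkl : k ≤ l) (hlk : l ≤ k + 1)
    (hk : (k : ℝ) / 2 ^ p ∈ S) (hl : (l : ℝ) / 2 ^ p ∈ S) :
    |f ((l : ℝ) / 2 ^ p) - f ((k : ℝ) / 2 ^ p)| ≤ ((2 : ℝ) ^ (-γ)) ^ p := by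
  have hr0 : (0 : ℝ) < (2 : ℝ) ^ (-γ) := Real.rpow_pos_of_pos two_pos _
  rcases eq_or_lt_of_le hkl with h | h
  · simp [← h]; positivity
  · have hl' : l = k + 1 := by omega
    subst hl'
    have e : ((k + 1 : ℤ) : ℝ) = (k : ℝ) + 1 := by push_cast; ring
    rw [e] at hl ⊢
    exact hstep p hNp k hk hl

private lemma chain_main (hγ : 0 < γ)
    (hS : ∀ x ∈ S, ∀ y ∈ S, ∀ (m : ℕ) (k : ℤ),
      x ≤ (k : ℝ) / 2 ^ m → (k : ℝ) / 2 ^ m ≤ y → (k : ℝ) / 2 ^ m ∈ S)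
    (hstep : ∀ n : ℕ, N ≤ n → ∀ k : ℤ, (k : ℝ) / 2 ^ n ∈ S → ((k : ℝ) + 1) / 2 ^ n ∈ S →
      |f (((k : ℝ) + 1) / 2 ^ n) - f ((k : ℝ) / 2 ^ n)| ≤ ((2 : ℝ) ^ (-γ)) ^ n) :
    ∀ n : ℕ, N ≤ n → ∀ m : ℕ, n ≤ m → ∀ k l : ℤ,
      (k : ℝ) / 2 ^ m ∈ S → (l : ℝ) / 2 ^ m ∈ S → k ≤ l →
      ((l : ℝ) - k) / 2 ^ m ≤ (1 / 2 : ℝ) ^ n →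
      |f ((l : ℝ) / 2 ^ m) - f ((k : ℝ) / 2 ^ m)| ≤
        2 * ∑ j ∈ Finset.Icc n m, ((2 : ℝ) ^ (-γ)) ^ j := by
  have hr0 : (0 : ℝ) < (2 : ℝ) ^ (-γ) := Real.rpow_pos_of_pos two_pos _
  set r : ℝ := (2 : ℝ) ^ (-γ) with hr
  have hsum_nonneg : ∀ a b : ℕ, 0 ≤ ∑ j ∈ Finset.Icc a b, r ^ j := fun a b =>
    Finset.sum_nonneg fun j _ => (pow_pos hr0 j).le
  have hmem_sum : ∀ a b : ℕ, a ≤ b → r ^ b ≤ ∑ j ∈ Finset.Icc a b, r ^ j := by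
    intro a b hab
    exact Finset.single_le_sum (fun j _ => (pow_pos hr0 j).le)
      (Finset.mem_Icc.2 ⟨hab, le_refl b⟩)
  intro n hNn m hnm
  induction m, hnm using Nat.le_induction with
  | base =>
    intro k l hk hl hkl hd
    have hlk : l ≤ k + 1 := by
      by_contra hcon
      push_neg at hcon
      have hcon2 : k + 2 ≤ l := by omega
      have h2 : ((k : ℝ) + 2) ≤ (l : ℝ) := by exact_mod_cast hcon2
      have hp : (0 : ℝ) < 2 ^ n := by positivity
      rw [div_le_iff₀ hp] at hd
      have : (1 / 2 : ℝ) ^ n * 2 ^ n = 1 := by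
        rw [← mul_pow]; norm_num
      rw [this] at hd
      linarith
    have := chain_adj hstep hNn hkl hlk hk hl
    refine this.trans ?_
    have h1 : r ^ n ≤ ∑ j ∈ Finset.Icc n n, r ^ j := hmem_sum n n le_rfl
    nlinarith [pow_pos hr0 n, hsum_nonneg n n]
  | succ m hnm IH =>
    intro k l hk hl hkl hd
    have hNm1 : N ≤ m + 1 := le_trans hNn (by omega)
    by_cases hll : l ≤ k + 1
    · have := chain_adj hstep hNm1 hkl hll hk hl
      refine this.trans ?_
      have h1 : r ^ (m + 1) ≤ ∑ j ∈ Finset.Icc n (m + 1), r ^ j :=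
        hmem_sum n (m + 1) (by omega)
      nlinarith [pow_pos hr0 (m + 1), hsum_nonneg n (m + 1)]
    · push_neg at hll
      obtain ⟨k', hk'1, hk'2⟩ : ∃ k' : ℤ, k ≤ 2 * k' ∧ 2 * k' ≤ k + 1 := by
        rcases Int.even_or_odd k with ⟨a, ha⟩ | ⟨a, ha⟩
        exacts [⟨a, by omega, by omega⟩, ⟨a + 1, by omega, by omega⟩]
      obtain ⟨l', hl'1, hl'2⟩ : ∃ l' : ℤ, 2 * l' ≤ l ∧ l ≤ 2 * l' + 1 := by
        rcases Int.even_or_odd l with ⟨b, hb⟩ | ⟨b, hb⟩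
        exacts [⟨b, by omega, by omega⟩, ⟨b, by omega, by omega⟩]
      have hk'l' : k' ≤ l' := by omega
      -- membership of the rounded points
      have hkmem : ((2 * k' : ℤ) : ℝ) / 2 ^ (m + 1) ∈ S := by
        rw [dy_level_succ]
        rw [show ((k' : ℝ) / 2 ^ m) = ((2 * k' : ℤ) : ℝ) / 2 ^ (m + 1) from (dy_level_succ k').symm]
        exact hS _ hk _ hl _ _ (dy_le_dy hk'1) (dy_le_dy (by omega))
      have hlmem : ((2 * l' : ℤ) : ℝ) / 2 ^ (m + 1) ∈ S := by
        rw [dy_level_succ]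
        rw [show ((l' : ℝ) / 2 ^ m) = ((2 * l' : ℤ) : ℝ) / 2 ^ (m + 1) from (dy_level_succ l').symm]
        exact hS _ hk _ hl _ _ (dy_le_dy (by omega)) (dy_le_dy hl'1)
      have hkmem' : (k' : ℝ) / 2 ^ m ∈ S := by rw [← dy_level_succ]; exact hkmem
      have hlmem' : (l' : ℝ) / 2 ^ m ∈ S := by rw [← dy_level_succ]; exact hlmem
      -- the three increments
      have h1 : |f (((2 * k' : ℤ) : ℝ) / 2 ^ (m + 1)) - f ((k : ℝ) / 2 ^ (m + 1))| ≤ r ^ (m + 1) :=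
        chain_adj hstep hNm1 hk'1 hk'2 hk hkmem
      have h3 : |f ((l : ℝ) / 2 ^ (m + 1)) - f (((2 * l' : ℤ) : ℝ) / 2 ^ (m + 1))| ≤ r ^ (m + 1) :=
        chain_adj hstep hNm1 hl'1 hl'2 hlmem hl
      have h2 : |f ((l' : ℝ) / 2 ^ m) - f ((k' : ℝ) / 2 ^ m)| ≤
          2 * ∑ j ∈ Finset.Icc n m, r ^ j := by
        apply IH _ _ hkmem' hlmem' hk'l'
        have heq : ((l' : ℝ) - k') / 2 ^ m = ((2 * l' : ℝ) - 2 * k') / 2 ^ (m + 1) := by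
          ring
        rw [heq]
        refine le_trans ?_ hd
        apply div_le_div_of_nonneg_right ?_ (by positivity)
        have : (2 * l' : ℝ) ≤ (l : ℝ) := by exact_mod_cast hl'1
        have h2' : (k : ℝ) ≤ 2 * k' := by exact_mod_cast hk'1
        linarith
      -- triangle inequality
      have htri : |f ((l : ℝ) / 2 ^ (m + 1)) - f ((k : ℝ) / 2 ^ (m + 1))| ≤
          |f ((l : ℝ) / 2 ^ (m + 1)) - f (((2 * l' : ℤ) : ℝ) / 2 ^ (m + 1))| +
          |f (((2 * l' : ℤ) : ℝ) / 2 ^ (m + 1)) - f (((2 * k' : ℤ) : ℝ) / 2 ^ (m + 1))| +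
          |f (((2 * k' : ℤ) : ℝ) / 2 ^ (m + 1)) - f ((k : ℝ) / 2 ^ (m + 1))| := by
        have := abs_sub_abs_le_abs_sub (f ((l : ℝ) / 2 ^ (m + 1))) (f ((k : ℝ) / 2 ^ (m + 1)))
        calc |f ((l : ℝ) / 2 ^ (m + 1)) - f ((k : ℝ) / 2 ^ (m + 1))| ≤
            |f ((l : ℝ) / 2 ^ (m + 1)) - f (((2 * l' : ℤ) : ℝ) / 2 ^ (m + 1))| +
            |f (((2 * l' : ℤ) : ℝ) / 2 ^ (m + 1)) - f ((k : ℝ) / 2 ^ (m + 1))| :=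
              abs_sub_le _ _ _
          _ ≤ _ := by
              have := abs_sub_le (f (((2 * l' : ℤ) : ℝ) / 2 ^ (m + 1)))
                (f (((2 * k' : ℤ) : ℝ) / 2 ^ (m + 1))) (f ((k : ℝ) / 2 ^ (m + 1)))
              linarith
      have hmid : |f (((2 * l' : ℤ) : ℝ) / 2 ^ (m + 1)) - f (((2 * k' : ℤ) : ℝ) / 2 ^ (m + 1))| ≤
          2 * ∑ j ∈ Finset.Icc n m, r ^ j := by
        rw [dy_level_succ, dy_level_succ]
        exact h2
      have hsum : ∑ j ∈ Finset.Icc n (m + 1), r ^ j =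
          (∑ j ∈ Finset.Icc n m, r ^ j) + r ^ (m + 1) :=
        Finset.sum_Icc_succ_top (by omega) _
      rw [hsum]
      linarith

end chain

set_option maxHeartbeats 1000000 in
private lemma chain_holder {S : Set ℝ} {f : ℝ → ℝ} {γ : ℝ} {N : ℕ} (hγ : 0 < γ)
    (hS : ∀ x ∈ S, ∀ y ∈ S, ∀ (m : ℕ) (k : ℤ),
      x ≤ (k : ℝ) / 2 ^ m → (k : ℝ) / 2 ^ m ≤ y → (k : ℝ) / 2 ^ m ∈ S)
    (hdy : ∀ x ∈ S, ∃ (m : ℕ) (k : ℤ), x = (k : ℝ) / 2 ^ m)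
    (hstep : ∀ n : ℕ, N ≤ n → ∀ k : ℤ, (k : ℝ) / 2 ^ n ∈ S → ((k : ℝ) + 1) / 2 ^ n ∈ S →
      |f (((k : ℝ) + 1) / 2 ^ n) - f ((k : ℝ) / 2 ^ n)| ≤ ((2 : ℝ) ^ (-γ)) ^ n)
    {b : ℝ} (hb : ∀ x ∈ S, |f x| ≤ b) :
    ∃ C : ℝ, 0 ≤ C ∧ ∀ s ∈ S, ∀ t ∈ S, |f t - f s| ≤ C * |t - s| ^ γ := by
  set r : ℝ := (2:ℝ) ^ (-γ) with hrdef
  have hr0 : (0:ℝ) < r := Real.rpow_pos_of_pos two_pos _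
  have hr1 : r < 1 := Real.rpow_lt_one_of_one_lt_of_neg one_lt_two (by linarith)
  set b' : ℝ := max b 0 with hb'def
  have hb'0 : 0 ≤ b' := le_max_right _ _
  have hb' : ∀ x ∈ S, |f x| ≤ b' := fun x hx => (hb x hx).trans (le_max_left _ _)
  set C : ℝ := 2 * (1 - r)⁻¹ * (2:ℝ) ^ γ + 2 * b' * ((2:ℝ) ^ N : ℝ) ^ γ with hCdef
  have h2γ : (0:ℝ) ≤ (2:ℝ) ^ γ := (Real.rpow_pos_of_pos two_pos γ).le
  have h2Nγ : (0:ℝ) ≤ ((2:ℝ) ^ N : ℝ) ^ γ := (Real.rpow_pos_of_pos (by positivity) γ).le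
  have hC0 : 0 ≤ C := by
    have : (0:ℝ) ≤ (1 - r)⁻¹ := inv_nonneg.2 (by linarith)
    positivity
  refine ⟨C, hC0, ?_⟩
  suffices aux : ∀ s ∈ S, ∀ t ∈ S, s ≤ t → |f t - f s| ≤ C * |t - s| ^ γ by
    intro s hs t ht
    rcases le_total s t with h | h
    · exact aux s hs t ht h
    · rw [abs_sub_comm (f t), abs_sub_comm t]
      exact aux t ht s hs h
  intro s hs t ht hst
  rcases eq_or_lt_of_le hst with heq | hlt
  · subst heq
    simp [Real.zero_rpow hγ.ne']
  have hd0 : 0 < t - s := by linarith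
  have habs : |t - s| = t - s := abs_of_pos hd0
  rw [habs]
  have hdγ0 : (0:ℝ) ≤ (t - s) ^ γ := Real.rpow_nonneg hd0.le _
  by_cases hcase : t - s ≤ (1/2:ℝ) ^ N
  · obtain ⟨n, hNn, hlow, hhigh⟩ := exists_scale hd0 hcase
    obtain ⟨ms, ks, hks⟩ := hdy s hs
    obtain ⟨mt, kt, hkt⟩ := hdy t ht
    set m : ℕ := max (max ms mt) n with hmdef
    set k : ℤ := ks * 2 ^ (m - ms) with hkdef
    set l : ℤ := kt * 2 ^ (m - mt) with hldef
    have hsm : s = (k : ℝ) / 2 ^ m := by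
      rw [hks]; exact dy_raise (le_trans (le_max_left _ _) (le_max_left _ _))
    have htm : t = (l : ℝ) / 2 ^ m := by
      rw [hkt]; exact dy_raise (le_trans (le_max_right _ _) (le_max_left _ _))
    have h2m : (0:ℝ) < 2 ^ m := by positivity
    have hklR : (k:ℝ) ≤ (l:ℝ) := by
      have h' : (k:ℝ) / 2 ^ m ≤ (l:ℝ) / 2 ^ m := by rw [← hsm, ← htm]; exact hst
      calc (k:ℝ) = (k:ℝ) / 2 ^ m * 2 ^ m := by field_simp
        _ ≤ (l:ℝ) / 2 ^ m * 2 ^ m := mul_le_mul_of_nonneg_right h' h2m.le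
        _ = (l:ℝ) := by field_simp
    have hkl : k ≤ l := by exact_mod_cast hklR
    have hdd : ((l:ℝ) - k) / 2 ^ m = t - s := by rw [hsm, htm]; ring
    have hmain := chain_main hγ hS hstep n hNn m (le_max_right _ _) k l
      (hsm ▸ hs) (htm ▸ ht) hkl (by rw [hdd]; exact hhigh)
    rw [← hsm, ← htm] at hmain
    have hgeom : (2:ℝ) * ∑ j ∈ Finset.Icc n m, r ^ j ≤ 2 * (r ^ n * (1 - r)⁻¹) := by
      have := geom_tail hr0.le hr1 n m
      linarith
    have hrn : r ^ n ≤ (2:ℝ) ^ γ * (t - s) ^ γ := by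
      rw [← half_pow_rpow γ n, ← Real.mul_rpow (by norm_num) hd0.le]
      apply Real.rpow_le_rpow (by positivity) ?_ hγ.le
      have : (1/2:ℝ)^n = 2 * (1/2:ℝ)^(n+1) := by rw [pow_succ]; ring
      rw [this]
      linarith
    have hinv : (0:ℝ) ≤ (1 - r)⁻¹ := inv_nonneg.2 (by linarith)
    calc |f t - f s| ≤ 2 * (r ^ n * (1 - r)⁻¹) := le_trans hmain hgeom
      _ ≤ 2 * (1 - r)⁻¹ * ((2:ℝ) ^ γ * (t - s) ^ γ) := by nlinarith
      _ ≤ 2 * b' * ((2:ℝ) ^ N : ℝ) ^ γ * (t - s) ^ γ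
            + 2 * (1 - r)⁻¹ * ((2:ℝ) ^ γ * (t - s) ^ γ) := by
          have h0 : (0:ℝ) ≤ 2 * b' * ((2:ℝ) ^ N : ℝ) ^ γ := by positivity
          have := mul_nonneg h0 hdγ0
          linarith
      _ = C * (t - s) ^ γ := by rw [hCdef]; ring
  · push_neg at hcase
    have hbnd : |f t - f s| ≤ 2 * b' := by
      have h1 := hb' t ht
      have h2 := hb' s hs
      calc |f t - f s| ≤ |f t| + |f s| := abs_sub _ _
        _ ≤ 2 * b' := by linarith
    have hkey : (1:ℝ) ≤ ((2:ℝ) ^ N : ℝ) ^ γ * (t - s) ^ γ := by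
      have h1 : ((1/2:ℝ)^N) ^ γ ≤ (t - s) ^ γ :=
        Real.rpow_le_rpow (by positivity) hcase.le hγ.le
      have h2 : ((2:ℝ) ^ N : ℝ) ^ γ * ((1/2:ℝ)^N) ^ γ = 1 := by
        rw [← Real.mul_rpow (by positivity) (by positivity)]
        have : ((2:ℝ) ^ N : ℝ) * (1/2:ℝ)^N = 1 := by
          rw [← mul_pow]; norm_num
        rw [this, Real.one_rpow]
      nlinarith [Real.rpow_pos_of_pos (show (0:ℝ) < (2:ℝ)^N by positivity) γ]
    calc |f t - f s| ≤ 2 * b' := hbnd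
      _ = 2 * b' * 1 := by ring
      _ ≤ 2 * b' * (((2:ℝ) ^ N : ℝ) ^ γ * (t - s) ^ γ) :=
          mul_le_mul_of_nonneg_left hkey (by positivity)
      _ ≤ 2 * (1 - r)⁻¹ * (2:ℝ) ^ γ * (t - s) ^ γ
            + 2 * b' * (((2:ℝ) ^ N : ℝ) ^ γ * (t - s) ^ γ) := by
          have h0 : (0:ℝ) ≤ 2 * (1 - r)⁻¹ * (2:ℝ) ^ γ := by
            have : (0:ℝ) ≤ (1 - r)⁻¹ := inv_nonneg.2 (by linarith)
            positivity
          have := mul_nonneg h0 hdγ0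
          linarith
      _ = C * (t - s) ^ γ := by rw [hCdef]; ring

/-- The dyadic grid points of `I` inside `[q, q']`. -/
def Sgrid (I : Set ℝ) (q q' : ℝ) : Set ℝ :=
  {x | x ∈ I ∧ q ≤ x ∧ x ≤ q' ∧ ∃ (m : ℕ) (k : ℤ), x = (k : ℝ) / 2 ^ m}

set_option maxHeartbeats 1000000 in
private lemma ae_holder_grid {Ω : Type*} [MeasurableSpace Ω] (P : Measure Ω)
    [IsProbabilityMeasure P] {I : Set ℝ} (hI : I.OrdConnected)
    {X : ℝ → Ω → ℝ} (hX : ∀ t, Measurable (X t))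
    {α β γ : ℝ} (hα : 0 < α) (hγ0 : 0 < γ) (hγαβ : γ * α < β)
    {M : ℝ} (hM : 0 < M) {ε c : ℝ} (hε : 0 < ε) (hc : 0 < c)
    (hmom : ∀ s ∈ I, ∀ t ∈ I, |t - s| < ε →
      (∫ ω, |clampR M (X t ω) - clampR M (X s ω)| ^ α ∂P) ≤ c * |t - s| ^ (1 + β))
    (q q' : ℝ) :
    ∀ᵐ ω ∂P, ∃ C : ℝ, 0 ≤ C ∧ ∀ s ∈ Sgrid I q q', ∀ t ∈ Sgrid I q q',
      |clampR M (X t ω) - clampR M (X s ω)| ≤ C * |t - s| ^ γ := by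
  obtain ⟨N₀, hN₀⟩ := exists_pow_lt_of_lt_one hε (by norm_num : (1/2:ℝ) < 1)
  set r : ℝ := (2:ℝ) ^ (-γ) with hrdef
  have hr0 : (0:ℝ) < r := Real.rpow_pos_of_pos two_pos _
  set ρ : ℝ := (2:ℝ) ^ (γ * α - β) with hρdef
  have hρ0 : (0:ℝ) < ρ := Real.rpow_pos_of_pos two_pos _
  have hρ1 : ρ < 1 := Real.rpow_lt_one_of_one_lt_of_neg one_lt_two (by linarith)
  set A : ℕ → ℤ → Set Ω := fun n k =>
    {ω | ((k:ℝ)/2^n ∈ I) ∧ (((k:ℝ)+1)/2^n ∈ I) ∧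
      r ^ n < |clampR M (X (((k:ℝ)+1)/2^n) ω) - clampR M (X ((k:ℝ)/2^n) ω)|} with hAdef
  set E : ℕ → Set Ω := fun n => ⋃ k ∈ Finset.Icc ⌈q * 2^n⌉ ⌊q' * 2^n⌋, A n k with hEdef
  -- the key exponent computation
  have hu : ∀ n : ℕ, (r^n)^(-α) * (c * ((1/2:ℝ)^n)^(1+β)) * 2^n = c * ρ^n := by
    intro n
    have hhn : (0:ℝ) ≤ (1/2:ℝ)^n := by positivity
    have e1 : (r^n)^(-α) = ((2:ℝ)^(γ*α))^n := by
      rw [hrdef, ← half_pow_rpow γ n, ← Real.rpow_mul hhn]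
      rw [show γ * -α = -(γ * α) by ring, half_pow_rpow, neg_neg]
    have e2 : ((1/2:ℝ)^n)^(1+β) = ((2:ℝ)^(-(1+β)))^n := half_pow_rpow (1+β) n
    rw [e1, e2]
    have e3 : ((2:ℝ)^(γ*α))^n * (c * ((2:ℝ)^(-(1+β)))^n) * 2^n
        = c * (((2:ℝ)^(γ*α)) * ((2:ℝ)^(-(1+β))) * 2)^n := by
      rw [mul_pow, mul_pow]; ring
    rw [e3, hρdef]
    congr 2
    rw [← Real.rpow_add two_pos,
      show (2:ℝ) ^ (γ * α + -(1 + β)) * 2 = (2:ℝ) ^ (γ * α + -(1 + β)) * (2:ℝ) ^ (1:ℝ) by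
        rw [Real.rpow_one],
      ← Real.rpow_add two_pos]
    congr 1
    ring
  -- per-event bound
  have hAbound : ∀ n, N₀ ≤ n → ∀ k : ℤ,
      P (A n k) ≤ ENNReal.ofReal ((r^n)^(-α) * (c * ((1/2:ℝ)^n)^(1+β))) := by
    intro n hn k
    by_cases hmem : ((k:ℝ)/2^n ∈ I) ∧ (((k:ℝ)+1)/2^n ∈ I)
    · set Z : Ω → ℝ := fun ω =>
        clampR M (X (((k:ℝ)+1)/2^n) ω) - clampR M (X ((k:ℝ)/2^n) ω) with hZdef
      have hsub : A n k ⊆ {ω | r^n < |Z ω|} := fun ω h => h.2.2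
      have hZm : Measurable Z :=
        (measurable_clampR (hX _) M).sub (measurable_clampR (hX _) M)
      have hZb : ∀ ω, |Z ω| ≤ 2*M := by
        intro ω
        calc |Z ω| ≤ |clampR M (X (((k:ℝ)+1)/2^n) ω)| + |clampR M (X ((k:ℝ)/2^n) ω)| :=
              abs_sub _ _
          _ ≤ 2*M := by
              have h1 := clampR_abs_le hM.le (X (((k:ℝ)+1)/2^n) ω)
              have h2 := clampR_abs_le hM.le (X ((k:ℝ)/2^n) ω)
              linarith
      refine (measure_mono hsub).trans ?_
      refine (meas_abs_gt_le P hZm hZb hα (pow_pos hr0 n)).trans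
        (ENNReal.ofReal_le_ofReal ?_)
      apply mul_le_mul_of_nonneg_left ?_ (Real.rpow_nonneg (pow_nonneg hr0.le n) _)
      have hd : |((k:ℝ)+1)/2^n - (k:ℝ)/2^n| = (1/2:ℝ)^n := by
        rw [div_sub_div_same, show ((k:ℝ)+1) - k = 1 by ring]
        rw [abs_of_pos (by positivity), one_div, ← inv_pow, one_div]
      have hlt : |((k:ℝ)+1)/2^n - (k:ℝ)/2^n| < ε := by
        rw [hd]
        exact lt_of_le_of_lt (pow_le_pow_of_le_one (by norm_num) (by norm_num) hn) hN₀
      have := hmom _ hmem.1 _ hmem.2 hlt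
      rwa [hd] at this
    · have hsub : A n k ⊆ (∅ : Set Ω) := fun ω h => hmem ⟨h.1, h.2.1⟩
      refine le_trans (measure_mono hsub) ?_
      simp
  -- the union bound
  set B : ℝ := |q'| + |q| + 2 with hBdef
  have hB0 : 0 < B := by positivity
  have hE : ∀ n, N₀ ≤ n → P (E n) ≤ ENNReal.ofReal ((B * c) * ρ^n) := by
    intro n hn
    have h2n1 : (1:ℝ) ≤ 2^n := one_le_pow₀ (by norm_num)
    have h2n0 : (0:ℝ) < 2^n := by positivity
    set u : ℝ := (r^n)^(-α) * (c * ((1/2:ℝ)^n)^(1+β)) with hudef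
    have hu0 : 0 ≤ u := by
      have := Real.rpow_nonneg (pow_nonneg hr0.le n) (-α)
      positivity
    have hcard : (((Finset.Icc ⌈q * 2^n⌉ ⌊q' * 2^n⌋).card : ℕ) : ℝ) ≤ B * 2^n := by
      rw [Int.card_Icc]
      have h1 : (((⌊q' * 2^n⌋ + 1 - ⌈q * 2^n⌉).toNat : ℤ) : ℝ)
          = ((max (⌊q' * 2^n⌋ + 1 - ⌈q * 2^n⌉) 0 : ℤ) : ℝ) := by
        rw [Int.toNat_eq_max]
      push_cast at h1 ⊢
      rw [h1]
      apply max_le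
      · have hf : ((⌊q' * 2^n⌋ : ℤ) : ℝ) ≤ q' * 2^n := Int.floor_le _
        have hcl : q * 2^n ≤ ((⌈q * 2^n⌉ : ℤ) : ℝ) := Int.le_ceil _
        have hq' : q' * 2^n ≤ |q'| * 2^n :=
          mul_le_mul_of_nonneg_right (le_abs_self q') h2n0.le
        have hq : -(q * 2^n) ≤ |q| * 2^n := by
          rw [← neg_mul]
          exact mul_le_mul_of_nonneg_right (neg_le_abs q) h2n0.le
        have : B * 2^n = |q'| * 2^n + |q| * 2^n + 2 * 2^n := by rw [hBdef]; ring
        rw [this]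
        linarith
      · positivity
    calc P (E n) ≤ ∑ k ∈ Finset.Icc ⌈q * 2^n⌉ ⌊q' * 2^n⌋, P (A n k) :=
          measure_biUnion_finset_le _ _
      _ ≤ ∑ _k ∈ Finset.Icc ⌈q * 2^n⌉ ⌊q' * 2^n⌋, ENNReal.ofReal u :=
          Finset.sum_le_sum fun k _ => hAbound n hn k
      _ = ((Finset.Icc ⌈q * 2^n⌉ ⌊q' * 2^n⌋).card : ℝ≥0∞) * ENNReal.ofReal u := by
          rw [Finset.sum_const, nsmul_eq_mul]
      _ ≤ ENNReal.ofReal (B * 2^n) * ENNReal.ofReal u := by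
          refine mul_le_mul_left ?_ _
          rw [← ENNReal.ofReal_natCast]
          exact ENNReal.ofReal_le_ofReal hcard
      _ = ENNReal.ofReal ((B * 2^n) * u) :=
          (ENNReal.ofReal_mul (by positivity)).symm
      _ = ENNReal.ofReal ((B * c) * ρ^n) := by
          congr 1
          have := hu n
          calc (B * 2^n) * u = B * (u * 2^n) := by ring
            _ = B * (c * ρ^n) := by rw [hudef, hu n]
            _ = (B * c) * ρ^n := by ring
  have hae := ae_eventually_of_geom P E hρ0.le hρ1 N₀ hE
  filter_upwards [hae] with ω hω
  obtain ⟨N₁, hN₁⟩ := eventually_atTop.1 hω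
  -- apply the deterministic chaining lemma
  apply chain_holder (N := max N₀ N₁) hγ0
  · -- hS
    intro x hx y hy m k hxk hky
    exact ⟨hI.out hx.1 hy.1 ⟨hxk, hky⟩, le_trans hx.2.1 hxk, le_trans hky hy.2.2.1,
      ⟨m, k, rfl⟩⟩
  · -- hdy
    intro x hx
    exact hx.2.2.2
  · -- hstep
    intro n hn k hk hk1
    have hkF : k ∈ Finset.Icc ⌈q * 2^n⌉ ⌊q' * 2^n⌋ := by
      rw [Finset.mem_Icc]
      constructor
      · apply Int.ceil_le.2
        have h1 : q ≤ (k:ℝ)/2^n := hk.2.1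
        rw [le_div_iff₀ (show (0:ℝ) < 2^n by positivity)] at h1
        exact h1
      · apply Int.le_floor.2
        have h1 : ((k:ℝ)+1)/2^n ≤ q' := hk1.2.2.1
        rw [div_le_iff₀ (show (0:ℝ) < 2^n by positivity)] at h1
        linarith
    have hnE := hN₁ n (le_trans (le_max_right N₀ N₁) hn)
    rw [hEdef] at hnE
    simp only [Set.mem_iUnion, not_exists] at hnE
    have hnA := hnE k hkF
    rw [hAdef] at hnA
    simp only [Set.mem_setOf_eq, not_and, not_lt] at hnA
    exact hnA hk.1 hk1.1
  · -- hb
    intro x hx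
    exact clampR_abs_le hM.le (X x ω)

private lemma ae_bounded {Ω : Type*} [MeasurableSpace Ω] (P : Measure Ω)
    [IsProbabilityMeasure P] {X : ℝ → Ω → ℝ} (hX : ∀ t, Measurable (X t))
    {J : Set ℝ} (hJc : J.Countable)
    (h1 : Tendsto (fun K : ℝ => (P {ω | ∀ t ∈ J, |X t ω| ≤ K}).toReal) atTop (nhds 1)) :
    ∀ᵐ ω ∂P, ∃ k : ℕ, ∀ s ∈ J, |X s ω| ≤ (k : ℝ) := by
  set U : Set Ω := ⋃ k : ℕ, {ω | ∀ s ∈ J, |X s ω| ≤ (k : ℝ)} with hUdef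
  have hUm : MeasurableSet U := by
    apply MeasurableSet.iUnion
    intro k
    have : {ω | ∀ s ∈ J, |X s ω| ≤ (k : ℝ)} = ⋂ s ∈ J, {ω | |X s ω| ≤ (k : ℝ)} := by
      ext ω; simp [Set.mem_iInter₂]
    rw [this]
    exact MeasurableSet.biInter hJc fun s _ =>
      measurableSet_le (hX s).abs measurable_const
  have hsub : ∀ K : ℝ, {ω | ∀ t ∈ J, |X t ω| ≤ K} ⊆ U := by
    intro K ω hω
    exact Set.mem_iUnion.2 ⟨⌈K⌉₊, fun s hs => (hω s hs).trans (Nat.le_ceil K)⟩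
  have hle1 : (1:ℝ) ≤ (P U).toReal := by
    apply le_of_tendsto h1
    filter_upwards with K
    exact ENNReal.toReal_mono (measure_ne_top _ _) (measure_mono (hsub K))
  have hle2 : (P U).toReal ≤ 1 := by
    have := prob_le_one (μ := P) (s := U)
    calc (P U).toReal ≤ (1 : ℝ≥0∞).toReal := ENNReal.toReal_mono ENNReal.one_ne_top this
      _ = 1 := by simp
  have hPU : P U = 1 := by
    rw [← ENNReal.toReal_eq_one_iff]
    linarith
  have hcompl : P Uᶜ = 0 := (prob_compl_eq_zero_iff hUm).2 hPU
  have : ∀ᵐ ω ∂P, ω ∈ U := by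
    rw [ae_iff]
    convert hcompl using 2
    rfl
  filter_upwards [this] with ω hω
  obtain ⟨k, hk⟩ := Set.mem_iUnion.1 hω
  exact ⟨k, hk⟩

private lemma ae_tendsto_clamp {Ω : Type*} [MeasurableSpace Ω] (P : Measure Ω)
    [IsProbabilityMeasure P] {I : Set ℝ} {X : ℝ → Ω → ℝ} (hX : ∀ t, Measurable (X t))
    {α β : ℝ} (hα : 0 < α) (hβ : 0 < β) {M : ℝ} (hM : 0 < M) {ε c : ℝ} (hε : 0 < ε) (hc : 0 < c)
    (hmom : ∀ s ∈ I, ∀ t ∈ I, |t - s| < ε →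
      (∫ ω, |clampR M (X t ω) - clampR M (X s ω)| ^ α ∂P) ≤ c * |t - s| ^ (1 + β))
    {t : ℝ} (ht : t ∈ I) {u : ℕ → ℝ} (hu : ∀ n, u n ∈ I) (hud : ∀ n, |u n - t| ≤ (1/2:ℝ)^n) :
    ∀ᵐ ω ∂P, Tendsto (fun n => clampR M (X (u n) ω)) atTop (𝓝 (clampR M (X t ω))) := by
  obtain ⟨N₀, hN₀⟩ := exists_pow_lt_of_lt_one hε (by norm_num : (1/2:ℝ) < 1)
  set ρ : ℝ := (2:ℝ) ^ (-(1+β)) with hρdef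
  have hρ0 : (0:ℝ) < ρ := Real.rpow_pos_of_pos two_pos _
  have hρ1 : ρ < 1 := Real.rpow_lt_one_of_one_lt_of_neg one_lt_two (by linarith)
  have key : ∀ j : ℕ, ∀ᵐ ω ∂P, ∀ᶠ n in atTop,
      ω ∉ {ω' | (1/2:ℝ)^j < |clampR M (X (u n) ω') - clampR M (X t ω')|} := by
    intro j
    set a : ℝ := (1/2:ℝ)^j with hadef
    have ha0 : 0 < a := by positivity
    apply ae_eventually_of_geom P _ hρ0.le hρ1 N₀ (K := a^(-α) * c)
    intro n hn
    set Z : Ω → ℝ := fun ω => clampR M (X (u n) ω) - clampR M (X t ω) with hZdef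
    have hZm : Measurable Z := (measurable_clampR (hX _) M).sub (measurable_clampR (hX _) M)
    have hZb : ∀ ω, |Z ω| ≤ 2*M := by
      intro ω
      calc |Z ω| ≤ |clampR M (X (u n) ω)| + |clampR M (X t ω)| := abs_sub _ _
        _ ≤ 2*M := by
            have h1 := clampR_abs_le hM.le (X (u n) ω)
            have h2 := clampR_abs_le hM.le (X t ω)
            linarith
    refine (meas_abs_gt_le P hZm hZb hα ha0).trans (ENNReal.ofReal_le_ofReal ?_)
    have hlt : |u n - t| < ε :=
      lt_of_le_of_lt ((hud n).trans
        (pow_le_pow_of_le_one (by norm_num) (by norm_num) hn)) hN₀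
    have hint := hmom t ht (u n) (hu n) hlt
    have hd : |u n - t| ^ (1+β) ≤ ((1/2:ℝ)^n) ^ (1+β) :=
      Real.rpow_le_rpow (abs_nonneg _) (hud n) (by linarith)
    have heq : ((1/2:ℝ)^n) ^ (1+β) = ρ^n := half_pow_rpow (1+β) n
    have hfin : (∫ ω, |Z ω| ^ α ∂P) ≤ c * ρ^n := by
      calc (∫ ω, |Z ω| ^ α ∂P) ≤ c * |u n - t| ^ (1+β) := hint
        _ ≤ c * ((1/2:ℝ)^n) ^ (1+β) := mul_le_mul_of_nonneg_left hd hc.le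
        _ = c * ρ^n := by rw [heq]
    calc a^(-α) * ∫ ω, |Z ω| ^ α ∂P ≤ a^(-α) * (c * ρ^n) :=
          mul_le_mul_of_nonneg_left hfin (Real.rpow_nonneg ha0.le _)
      _ = a^(-α) * c * ρ^n := by ring
  have hall : ∀ᵐ ω ∂P, ∀ j : ℕ, ∀ᶠ n in atTop,
      ω ∉ {ω' | (1/2:ℝ)^j < |clampR M (X (u n) ω') - clampR M (X t ω')|} :=
    (ae_all_iff).2 key
  filter_upwards [hall] with ω hω
  rw [Metric.tendsto_atTop]
  intro δ hδ
  obtain ⟨j, hj⟩ := exists_pow_lt_of_lt_one hδ (by norm_num : (1/2:ℝ) < 1)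
  obtain ⟨N, hN⟩ := eventually_atTop.1 (hω j)
  refine ⟨N, fun n hn => ?_⟩
  have := hN n hn
  simp only [Set.mem_setOf_eq, not_lt] at this
  rw [Real.dist_eq]
  exact lt_of_le_of_lt this hj

open Classical in
noncomputable def pickSeq (S : Set ℝ) (t : ℝ) (n : ℕ) : ℝ :=
  if h : ∃ s, s ∈ S ∧ |s - t| < (1/2:ℝ)^n then h.choose else t

lemma pickSeq_spec {S : Set ℝ} {t : ℝ} (ht : t ∈ closure S) (n : ℕ) :
    pickSeq S t n ∈ S ∧ |pickSeq S t n - t| ≤ (1/2:ℝ)^n := by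
  have hex : ∃ s, s ∈ S ∧ |s - t| < (1/2:ℝ)^n := by
    obtain ⟨s, hs, hd⟩ := Metric.mem_closure_iff.1 ht ((1/2:ℝ)^n) (by positivity)
    refine ⟨s, hs, ?_⟩
    rw [Real.dist_eq] at hd
    rwa [abs_sub_comm]
  rw [pickSeq, dif_pos hex]
  exact ⟨hex.choose_spec.1, hex.choose_spec.2.le⟩

lemma exists_dyadic_between {x y : ℝ} (hxy : x < y) :
    ∃ (m : ℕ) (k : ℤ), x < (k:ℝ)/2^m ∧ (k:ℝ)/2^m < y := by
  obtain ⟨m, hm⟩ := exists_pow_lt_of_lt_one (sub_pos.2 hxy) (by norm_num : (1/2:ℝ) < 1)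
  have h2m : (0:ℝ) < 2^m := by positivity
  have hhalf : (1/2:ℝ)^m = (2^m:ℝ)⁻¹ := by rw [one_div, inv_pow]
  refine ⟨m, ⌊x * 2^m⌋ + 1, ?_, ?_⟩
  · rw [lt_div_iff₀ h2m]
    push_cast
    linarith [Int.lt_floor_add_one (x * 2^m)]
  · rw [div_lt_iff₀ h2m]
    have h1 : ((⌊x * 2^m⌋ : ℤ) : ℝ) ≤ x * 2^m := Int.floor_le _
    have h2 : (1/2:ℝ)^m * 2^m = 1 := by
      rw [hhalf]; field_simp
    push_cast
    nlinarith
  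
lemma mem_closure_dyadic {I : Set ℝ} (hI : I.OrdConnected) {a b : ℝ} (ha : a ∈ I) (hb : b ∈ I)
    (hab : a < b) {t : ℝ} (ht : t ∈ I) :
    t ∈ closure {x | x ∈ I ∧ ∃ (m : ℕ) (k : ℤ), x = (k:ℝ)/2^m} := by
  rw [Metric.mem_closure_iff]
  intro δ hδ
  have hlo : min a t ∈ I := by rcases min_cases a t with ⟨h, _⟩ | ⟨h, _⟩ <;> rw [h] <;> assumption
  have hhi : max b t ∈ I := by rcases max_cases b t with ⟨h, _⟩ | ⟨h, _⟩ <;> rw [h] <;> assumption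
  rcases lt_or_ge t (max b t) with hlt | hge
  · obtain ⟨m, k, h1, h2⟩ := exists_dyadic_between (show t < min (max b t) (t + δ) from
      lt_min hlt (by linarith))
    refine ⟨(k:ℝ)/2^m, ⟨?_, m, k, rfl⟩, ?_⟩
    · apply hI.out hlo hhi
      constructor
      · exact le_trans (min_le_right a t) h1.le
      · exact le_trans h2.le (min_le_left _ _)
    · rw [Real.dist_eq, abs_of_neg (by linarith)]
      have := lt_of_lt_of_le h2 (min_le_right (max b t) (t + δ))
      linarith
  · have htop : t = max b t := le_antisymm (le_max_right b t) hge
    have hat : a < t := lt_of_lt_of_le hab (le_trans (le_max_left b t) hge)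
    have hlot : min a t = a := min_eq_left hat.le
    obtain ⟨m, k, h1, h2⟩ := exists_dyadic_between (show max a (t - δ) < t from
      max_lt hat (by linarith))
    refine ⟨(k:ℝ)/2^m, ⟨?_, m, k, rfl⟩, ?_⟩
    · apply hI.out hlo hhi
      constructor
      · rw [hlot]
        exact le_trans (le_max_left a (t - δ)) h1.le
      · exact le_trans h2.le (le_max_right b t)
    · rw [Real.dist_eq, abs_of_pos (by linarith)]
      have := lt_of_le_of_lt (le_max_right a (t - δ)) h1
      linarith

private lemma holderOnWith_of_abs {C γ : ℝ} (hC : 0 ≤ C) (hγ : 0 ≤ γ) {f : ℝ → ℝ} {U : Set ℝ}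
    (h : ∀ x ∈ U, ∀ y ∈ U, |f x - f y| ≤ C * |x - y| ^ γ) :
    HolderOnWith C.toNNReal γ.toNNReal f U := by
  intro x hx y hy
  rw [edist_dist, edist_dist, Real.dist_eq, Real.dist_eq]
  have hcoe : ((γ.toNNReal : ℝ≥0) : ℝ) = γ := Real.coe_toNNReal γ hγ
  calc ENNReal.ofReal |f x - f y| ≤ ENNReal.ofReal (C * |x - y| ^ γ) :=
        ENNReal.ofReal_le_ofReal (h x hx y hy)
    _ = ENNReal.ofReal C * ENNReal.ofReal (|x - y| ^ γ) := ENNReal.ofReal_mul hC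
    _ = (C.toNNReal : ℝ≥0∞) * ENNReal.ofReal |x - y| ^ ((γ.toNNReal : ℝ≥0) : ℝ) := by
        rw [hcoe, ENNReal.ofReal_rpow_of_nonneg (abs_nonneg _) hγ]
        rfl

private lemma tendsto_pickSeq {S : Set ℝ} {t : ℝ} (ht : t ∈ closure S) :
    Tendsto (fun n => pickSeq S t n) atTop (𝓝 t) := by
  have h0 : Tendsto (fun n => pickSeq S t n - t) atTop (𝓝 0) := by
    apply squeeze_zero_norm (fun n => (pickSeq_spec ht n).2)
    exact tendsto_pow_atTop_nhds_zero_of_lt_one (by norm_num) (by norm_num)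
  have := h0.add_const t
  simpa using this

/-- Kolmogorov-type continuity criterion with truncation.
`X^M(t) = max(−M, min(M, X(t)))` is the truncated process. If (1) `X` is bounded on a countable
dense subset `J` of the interval `I` with probability tending to `1`, and (2) the truncated
processes satisfy a Kolmogorov moment bound, then `X` has a version all of whose paths are
locally Hölder continuous on `I` with any exponent `γ ∈ (0, β/α)`. -/
theorem kolmogorov_truncated_criterion
    {Ω : Type*} [MeasurableSpace Ω] (P : Measure Ω) [IsProbabilityMeasure P]
    (I : Set ℝ) (hI : I.OrdConnected)
    (X : ℝ → Ω → ℝ) (hX : ∀ t : ℝ, Measurable (X t))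
    (h1 : ∃ J : Set ℝ, J ⊆ I ∧ J.Countable ∧ I ⊆ closure J ∧
      Tendsto (fun K : ℝ => (P {ω | ∀ t ∈ J, |X t ω| ≤ K}).toReal) atTop (nhds 1))
    (α β : ℝ) (hα : 0 < α) (hβ : 0 < β)
    (h2 : ∀ M : ℝ, 0 < M → ∃ ε > (0:ℝ), ∃ c > (0:ℝ), ∀ s ∈ I, ∀ t ∈ I, |t - s| < ε →
      (∫ ω, |max (-M) (min M (X t ω)) - max (-M) (min M (X s ω))| ^ α ∂P)
        ≤ c * |t - s| ^ (1 + β))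
    (γ : ℝ) (hγ0 : 0 < γ) (hγ : γ < β / α) :
    ∃ Y : ℝ → Ω → ℝ,
      (∀ t ∈ I, ∀ᵐ ω ∂P, Y t ω = X t ω) ∧
      ∀ ω : Ω, ∀ t ∈ I, ∃ U ∈ nhdsWithin t I, ∃ C : NNReal,
        HolderOnWith C (Real.toNNReal γ) (fun u => Y u ω) U := by
  classical
  obtain ⟨J, hJI, hJc, hJd, hJten⟩ := h1
  -- trivial case: `I` has at most one point
  by_cases hsing : ∀ a ∈ I, ∀ b ∈ I, a = b
  · refine ⟨X, fun t _ => ae_of_all _ fun _ => rfl, fun ω t ht =>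
      ⟨I, self_mem_nhdsWithin, 1, fun x hx y hy => ?_⟩⟩
    have hxy : x = y := hsing x hx y hy
    subst hxy
    simp
  push_neg at hsing
  obtain ⟨a, ha, b, hb, hab0⟩ := hsing
  obtain ⟨a0, b0, ha0, hb0, hab⟩ : ∃ a0 b0, a0 ∈ I ∧ b0 ∈ I ∧ a0 < b0 := by
    rcases lt_or_gt_of_ne hab0 with h | h
    exacts [⟨a, b, ha, hb, h⟩, ⟨b, a, hb, ha, h⟩]
  set D : Set ℝ := {x | x ∈ I ∧ ∃ (m : ℕ) (k : ℤ), x = (k:ℝ)/2^m} with hDdef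
  have hDcl : ∀ t ∈ I, t ∈ closure D := fun t ht => mem_closure_dyadic hI ha0 hb0 hab ht
  have hγαβ : γ * α < β := (lt_div_iff₀ hα).1 hγ
  -- moment data for each natural truncation level
  have h2' : ∀ Mk : ℕ, ∃ ε > (0:ℝ), ∃ c > (0:ℝ), ∀ s ∈ I, ∀ t ∈ I, |t - s| < ε →
      (∫ ω, |clampR ((Mk:ℝ)+1) (X t ω) - clampR ((Mk:ℝ)+1) (X s ω)| ^ α ∂P)
        ≤ c * |t - s| ^ (1 + β) := by
    intro Mk
    have := h2 ((Mk:ℝ)+1) (by positivity)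
    simpa [clampR] using this
  choose εM hεM cM hcM hmomM using h2'
  -- a.e. good events
  have hbdd := ae_bounded P hX hJc hJten
  have hgrid : ∀ᵐ ω ∂P, ∀ p : ℕ × ℚ × ℚ, ∃ C : ℝ, 0 ≤ C ∧
      ∀ s ∈ Sgrid I (p.2.1 : ℝ) (p.2.2 : ℝ), ∀ t ∈ Sgrid I (p.2.1 : ℝ) (p.2.2 : ℝ),
        |clampR ((p.1:ℝ)+1) (X t ω) - clampR ((p.1:ℝ)+1) (X s ω)| ≤ C * |t - s| ^ γ := by
    rw [ae_all_iff]
    intro p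
    exact ae_holder_grid P hI hX hα hγ0 hγαβ (by positivity) (hεM p.1) (hcM p.1)
      (hmomM p.1) _ _
  set G : Set Ω := {ω | (∃ k : ℕ, ∀ s ∈ J, |X s ω| ≤ (k:ℝ)) ∧
    ∀ p : ℕ × ℚ × ℚ, ∃ C : ℝ, 0 ≤ C ∧
      ∀ s ∈ Sgrid I (p.2.1 : ℝ) (p.2.2 : ℝ), ∀ t ∈ Sgrid I (p.2.1 : ℝ) (p.2.2 : ℝ),
        |clampR ((p.1:ℝ)+1) (X t ω) - clampR ((p.1:ℝ)+1) (X s ω)| ≤ C * |t - s| ^ γ}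
    with hGdef
  have hGae : ∀ᵐ ω ∂P, ω ∈ G := by
    filter_upwards [hbdd, hgrid] with ω hb' hg'
    exact ⟨hb', hg'⟩
  set NB : Ω → ℕ := fun ω =>
    if h : ∃ k : ℕ, ∀ s ∈ J, |X s ω| ≤ (k:ℝ) then Nat.find h else 0 with hNBdef
  set Y : ℝ → Ω → ℝ := fun t ω => if ω ∈ G then
      limUnder atTop (fun n => clampR ((NB ω : ℝ)+1) (X (pickSeq D t n) ω)) else 0 with hYdef
  -- grid Hölder estimate at the random level `NB ω`
  have hcore : ∀ ω ∈ G, ∀ q q' : ℚ, ∃ C : ℝ, 0 ≤ C ∧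
      ∀ s ∈ Sgrid I (q : ℝ) (q' : ℝ), ∀ t ∈ Sgrid I (q : ℝ) (q' : ℝ),
        |clampR ((NB ω : ℝ)+1) (X t ω) - clampR ((NB ω : ℝ)+1) (X s ω)| ≤ C * |t - s| ^ γ :=
    fun ω hω q q' => hω.2 (NB ω, q, q')
  -- convergence of the approximating sequence, for every `ω ∈ G` and `u ∈ I`
  have htend : ∀ ω ∈ G, ∀ u ∈ I,
      Tendsto (fun n => clampR ((NB ω : ℝ)+1) (X (pickSeq D u n) ω)) atTop (𝓝 (Y u ω)) := by
    intro ω hω u hu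
    obtain ⟨q, hq⟩ := exists_rat_lt u
    obtain ⟨q', hq'⟩ := exists_rat_gt u
    obtain ⟨C, hC0, hC⟩ := hcore ω hω q q'
    have hδ : (0:ℝ) < min (u - q) (q' - u) := lt_min (by linarith) (by linarith)
    obtain ⟨n₁, hn₁⟩ := exists_pow_lt_of_lt_one hδ (by norm_num : (1/2:ℝ) < 1)
    have hM0 : (0:ℝ) ≤ (NB ω : ℝ) + 1 := by positivity
    set f : ℕ → ℝ := fun n => clampR ((NB ω : ℝ)+1) (X (pickSeq D u n) ω) with hfdef
    have hpick : ∀ n, pickSeq D u n ∈ D ∧ |pickSeq D u n - u| ≤ (1/2:ℝ)^n :=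
      fun n => pickSeq_spec (hDcl u hu) n
    have hmemS : ∀ n, n₁ ≤ n → pickSeq D u n ∈ Sgrid I (q:ℝ) (q':ℝ) := by
      intro n hn
      have h1 := (hpick n).2
      have h2 : (1/2:ℝ)^n ≤ (1/2:ℝ)^n₁ :=
        pow_le_pow_of_le_one (by norm_num) (by norm_num) hn
      have h3 := abs_le.1 h1
      refine ⟨(hpick n).1.1, ?_, ?_, (hpick n).1.2⟩
      · have := min_le_left (u - q) (q' - u)
        linarith
      · have := min_le_right (u - q) (q' - u)
        linarith
    have hcauchy : CauchySeq f := by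
      apply cauchySeq_of_le_tendsto_0
        (b := fun N => if N < n₁ then 2*((NB ω : ℝ)+1)
          else C * (2 * (1/2:ℝ)^N) ^ γ)
      · intro n m N hn hm
        by_cases hN : N < n₁
        · rw [if_pos hN, Real.dist_eq]
          have h1 := clampR_abs_le hM0 (X (pickSeq D u n) ω)
          have h2 := clampR_abs_le hM0 (X (pickSeq D u m) ω)
          calc |f n - f m| ≤ |f n| + |f m| := abs_sub _ _
            _ ≤ 2*((NB ω : ℝ)+1) := by rw [hfdef]; dsimp only; linarith
        · rw [if_neg hN, Real.dist_eq]
          push_neg at hN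
          have hsn := hmemS n (le_trans hN hn)
          have hsm := hmemS m (le_trans hN hm)
          have hbound := hC _ hsm _ hsn
          refine hbound.trans ?_
          apply mul_le_mul_of_nonneg_left ?_ hC0
          apply Real.rpow_le_rpow (abs_nonneg _) ?_ hγ0.le
          have h1 := (hpick n).2
          have h2 := (hpick m).2
          have h3 : (1/2:ℝ)^n ≤ (1/2:ℝ)^N :=
            pow_le_pow_of_le_one (by norm_num) (by norm_num) hn
          have h4 : (1/2:ℝ)^m ≤ (1/2:ℝ)^N :=
            pow_le_pow_of_le_one (by norm_num) (by norm_num) hm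
          have h5 := abs_le.1 h1
          have h6 := abs_le.1 h2
          rw [abs_le]
          constructor <;> nlinarith
      · -- the bound tends to 0
        have hev : (fun N => if N < n₁ then 2*((NB ω : ℝ)+1)
            else C * (2 * (1/2:ℝ)^N) ^ γ) =ᶠ[atTop]
            (fun N => (C * (2:ℝ)^γ) * ((2:ℝ)^(-γ))^N) := by
          filter_upwards [eventually_ge_atTop n₁] with N hN
          rw [if_neg (by omega)]
          rw [Real.mul_rpow (by norm_num) (by positivity), half_pow_rpow γ N]
          ring
        have hlim : Tendsto (fun N => (C * (2:ℝ)^γ) * ((2:ℝ)^(-γ))^N) atTop (𝓝 0) := by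
          have h1 : Tendsto (fun N : ℕ => ((2:ℝ)^(-γ))^N) atTop (𝓝 0) :=
            tendsto_pow_atTop_nhds_zero_of_lt_one
              (Real.rpow_pos_of_pos two_pos _).le
              (Real.rpow_lt_one_of_one_lt_of_neg one_lt_two (by linarith))
          simpa using h1.const_mul (C * (2:ℝ)^γ)
        exact hlim.congr' hev.symm
    have := hcauchy.tendsto_limUnder
    have hYeq : Y u ω = limUnder atTop f := by rw [hYdef]; simp only [if_pos hω]; rfl
    rw [hYeq]
    exact this
  refine ⟨Y, ?_, ?_⟩
  · -- Y is a version of X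
    intro t ht
    have hDseq : ∀ n, pickSeq D t n ∈ I ∧ |pickSeq D t n - t| ≤ (1/2:ℝ)^n := by
      intro n
      have := pickSeq_spec (hDcl t ht) n
      exact ⟨this.1.1, this.2⟩
    have htJ : t ∈ closure J := hJd ht
    have hJseq : ∀ n, pickSeq J t n ∈ J ∧ |pickSeq J t n - t| ≤ (1/2:ℝ)^n :=
      fun n => pickSeq_spec htJ n
    have hBD : ∀ k : ℕ, ∀ᵐ ω ∂P, Tendsto (fun n => clampR ((k:ℝ)+1) (X (pickSeq D t n) ω))
        atTop (𝓝 (clampR ((k:ℝ)+1) (X t ω))) := fun k =>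
      ae_tendsto_clamp P hX hα hβ (by positivity) (hεM k) (hcM k) (hmomM k) ht
        (fun n => (hDseq n).1) (fun n => (hDseq n).2)
    have hBJ : ∀ k : ℕ, ∀ᵐ ω ∂P, Tendsto (fun n => clampR ((k:ℝ)+1) (X (pickSeq J t n) ω))
        atTop (𝓝 (clampR ((k:ℝ)+1) (X t ω))) := fun k =>
      ae_tendsto_clamp P hX hα hβ (by positivity) (hεM k) (hcM k) (hmomM k) ht
        (fun n => hJI (hJseq n).1) (fun n => (hJseq n).2)
    filter_upwards [hGae, ae_all_iff.2 hBD, ae_all_iff.2 hBJ] with ω hωG hD' hJ'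
    have hex : ∃ k : ℕ, ∀ s ∈ J, |X s ω| ≤ (k:ℝ) := hωG.1
    have hNB : ∀ s ∈ J, |X s ω| ≤ (NB ω : ℝ) := by
      rw [hNBdef]; dsimp only; rw [dif_pos hex]
      exact Nat.find_spec hex
    have h1' : Y t ω = clampR ((NB ω : ℝ)+1) (X t ω) := by
      have hYeq : Y t ω = limUnder atTop
          (fun n => clampR ((NB ω : ℝ)+1) (X (pickSeq D t n) ω)) := by
        rw [hYdef]; simp only [if_pos hωG]
      rw [hYeq]
      exact (hD' (NB ω)).limUnder_eq
    have h2' : |clampR ((NB ω : ℝ)+1) (X t ω)| ≤ (NB ω : ℝ) := by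
      apply le_of_tendsto (hJ' (NB ω)).abs
      filter_upwards with n
      have hmem := (hJseq n).1
      have hXb := hNB _ hmem
      rw [clampR_eq_self (hXb.trans (by linarith))]
      exact hXb
    have h3' : clampR ((NB ω : ℝ)+1) (X t ω) = X t ω :=
      eq_self_of_clampR_lt (by positivity) (lt_of_le_of_lt h2' (by linarith))
    rw [h1', h3']
  · -- path regularity
    intro ω t ht
    by_cases hωG : ω ∈ G
    · obtain ⟨q, hq⟩ := exists_rat_lt t
      obtain ⟨q', hq'⟩ := exists_rat_gt t
      obtain ⟨C, hC0, hC⟩ := hcore ω hωG q q'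
      refine ⟨I ∩ Ioo (q:ℝ) (q':ℝ),
        inter_mem_nhdsWithin _ (isOpen_Ioo.mem_nhds ⟨hq, hq'⟩), C.toNNReal, ?_⟩
      apply holderOnWith_of_abs hC0 hγ0.le
      intro x hx y hy
      have hxI : x ∈ I := hx.1
      have hyI : y ∈ I := hy.1
      have htx := htend ω hωG x hxI
      have hty := htend ω hωG y hyI
      -- eventual membership of the approximating sequences in the grid
      have hmem : ∀ z : ℝ, z ∈ Ioo (q:ℝ) (q':ℝ) → z ∈ I →
          ∀ᶠ n in atTop, pickSeq D z n ∈ Sgrid I (q:ℝ) (q':ℝ) := by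
        intro z hz hzI
        have hδ : (0:ℝ) < min (z - q) (q' - z) := lt_min (by linarith [hz.1]) (by linarith [hz.2])
        obtain ⟨n₁, hn₁⟩ := exists_pow_lt_of_lt_one hδ (by norm_num : (1/2:ℝ) < 1)
        filter_upwards [eventually_ge_atTop n₁] with n hn
        have hpick := pickSeq_spec (hDcl z hzI) n
        have h2 : (1/2:ℝ)^n ≤ (1/2:ℝ)^n₁ :=
          pow_le_pow_of_le_one (by norm_num) (by norm_num) hn
        have h3 := abs_le.1 hpick.2
        refine ⟨hpick.1.1, ?_, ?_, hpick.1.2⟩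
        · have := min_le_left (z - q) (q' - z)
          linarith
        · have := min_le_right (z - q) (q' - z)
          linarith
      have hlimL : Tendsto (fun n => |clampR ((NB ω : ℝ)+1) (X (pickSeq D x n) ω)
          - clampR ((NB ω : ℝ)+1) (X (pickSeq D y n) ω)|) atTop (𝓝 |Y x ω - Y y ω|) :=
        (htx.sub hty).abs
      have hpx : Tendsto (fun n => pickSeq D x n) atTop (𝓝 x) := tendsto_pickSeq (hDcl x hxI)
      have hpy : Tendsto (fun n => pickSeq D y n) atTop (𝓝 y) := tendsto_pickSeq (hDcl y hyI)
      have hlimR : Tendsto (fun n => C * |pickSeq D x n - pickSeq D y n| ^ γ) atTop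
          (𝓝 (C * |x - y| ^ γ)) := by
        apply Tendsto.const_mul
        exact ((hpx.sub hpy).abs).rpow_const (Or.inr hγ0.le)
      refine le_of_tendsto_of_tendsto hlimL hlimR ?_
      filter_upwards [hmem x hx.2 hxI, hmem y hy.2 hyI] with n hnx hny
      exact hC _ hny _ hnx
    · refine ⟨I, self_mem_nhdsWithin, 1, fun x hx y hy => ?_⟩
      have hx0 : Y x ω = 0 := by rw [hYdef]; simp only [if_neg hωG]
      have hy0 : Y y ω = 0 := by rw [hYdef]; simp only [if_neg hωG]
      simp only [hx0, hy0, edist_self]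
      exact zero_le
end
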